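/- arXiv:2309.02756 — 2 statements merged into one kernel-verified Lean document; each statement's English description precedes it below -/
import Mathlib

section
/- Step correspondence between configuration and residual transitions in a cause-respecting RPES: if last(t) ⇀^{l(A∪B̲)} last(t') in the configuration transition system, then E \ t ⇀^{l(A∪B̲)} E \ (t(A∪B̲)) in the residual transition system and last(t(A∪B̲)) = last(t'); conversely, if E' ⇀^{l(A∪B̲)} E'' in the residual system and E' = E \ t, then there exists a trace t' with E'' = E \ t' and last(t) ⇀^{l(A∪B̲)} last(t'). -/
/-- Data of a (labeled) reversible prime event structure (RPES) over actions `L`: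
a carrier set of events, causality `lt`, conflict `conf`, labeling, a set `F` of
reversible events, reverse causality `rc` (`rc e u` means `e ≺ u̲`), prevention
`prev` (`prev e u` means `e ▷ u̲`), and an initial configuration `C0`. -/
structure RPESData (E : Type) (L : Type) where
  carrier : Set E
  lt : E → E → Prop
  conf : E → E → Prop
  label : E → L
  F : Set E
  rc : E → E → Prop
  prev : E → E → Prop
  C0 : Set E

/-- Data of a (labeled) prime event structure (PES) with empty initial configuration. -/
structure PESData (E : Type) (L : Type) where
  carrier : Set E
  lt : E → E → Prop
  conf : E → E → Prop
  label : E → L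

namespace RPESData

variable {E : Type} {L : Type}

/-- A set of events is conflict-free. -/
def ConflictFree (R : RPESData E L) (X : Set E) : Prop :=
  ∀ e ∈ X, ∀ e' ∈ X, ¬ R.conf e e'

/-- Sustained causation: `a ≪ b` iff `a < b` and, if `a` is reversible, `b ▷ a̲`. -/
def SC (R : RPESData E L) (a b : E) : Prop :=
  R.lt a b ∧ (a ∈ R.F → R.prev b a)

/-- The axioms of a reversible prime event structure. -/
structure IsRPES (R : RPESData E L) : Prop where
  countable : R.carrier.Countable
  lt_carrier : ∀ a b, R.lt a b → a ∈ R.carrier ∧ b ∈ R.carrier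
  conf_carrier : ∀ a b, R.conf a b → a ∈ R.carrier ∧ b ∈ R.carrier
  conf_irrefl : ∀ a, ¬ R.conf a a
  conf_symm : ∀ a b, R.conf a b → R.conf b a
  lt_irrefl : ∀ a, ¬ R.lt a a
  lt_trans : ∀ a b c, R.lt a b → R.lt b c → R.lt a c
  causes_finite : ∀ e, {e' | R.lt e' e}.Finite
  causes_cf : ∀ e, R.ConflictFree {e' | R.lt e' e}
  F_carrier : R.F ⊆ R.carrier
  rc_carrier : ∀ a b, R.rc a b → a ∈ R.carrier ∧ b ∈ R.F
  rc_refl : ∀ u ∈ R.F, R.rc u u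
  rcauses_finite : ∀ u ∈ R.F, {e | R.rc e u}.Finite
  rcauses_cf : ∀ u ∈ R.F, R.ConflictFree {e | R.rc e u}
  prev_carrier : ∀ a b, R.prev a b → a ∈ R.carrier ∧ b ∈ R.F
  prev_rc_disjoint : ∀ a b, ¬ (R.prev a b ∧ R.rc a b)
  sc_trans : ∀ a b c, R.SC a b → R.SC b c → R.SC a c
  conf_hered_sc : ∀ a b c, R.conf a b → R.SC b c → R.conf a c
  C0_carrier : R.C0 ⊆ R.carrier
  C0_finite : R.C0.Finite
  C0_closed : ∀ e ∈ R.C0, ∀ e', R.lt e' e → e' ∈ R.C0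
  C0_cf : R.ConflictFree R.C0

/-- A cause-respecting RPES: causality is sustained causation. -/
def CauseRespecting (R : RPESData E L) : Prop :=
  ∀ a b, R.lt a b → R.SC a b

/-- A causal RPES. -/
def Causal (R : RPESData E L) : Prop :=
  (∀ e, ∀ u ∈ R.F, (R.rc e u ↔ e = u)) ∧
  (∀ e, ∀ u ∈ R.F, (R.prev e u ↔ R.lt u e))

/-- The mixed step `A ∪ B̲` is enabled at configuration `C`. -/
def Enabled (R : RPESData E L) (C A B : Set E) : Prop :=
  A.Finite ∧ B.Finite ∧ A ⊆ R.carrier ∧ B ⊆ R.F ∧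
  A ∩ C = ∅ ∧ B ⊆ C ∧ R.ConflictFree (C ∪ A) ∧
  (∀ e ∈ A, ∀ e', R.lt e' e → e' ∈ C \ B) ∧
  (∀ e ∈ B, ∀ e', R.rc e' e → e' ∈ C \ (B \ {e})) ∧
  (∀ e ∈ B, ∀ e', R.prev e' e → e' ∉ C ∪ A)

/-- `IsTraceFrom R C t C'`: the sequence of mixed steps `t` can be executed
starting at `C`, ending in `C'`. -/
def IsTraceFrom (R : RPESData E L) : Set E → List (Set E × Set E) → Set E → Prop
  | C, [], C' => C' = C
  | C, p :: t, C' => R.Enabled C p.1 p.2 ∧ R.IsTraceFrom ((C \ p.2) ∪ p.1) t C'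

/-- `t` is a trace of `R` with `last(t) = C`. -/
def IsTraceTo (R : RPESData E L) (t : List (Set E × Set E)) (C : Set E) : Prop :=
  R.IsTraceFrom R.C0 t C

/-- `t` is a trace of `R`. -/
def IsTrace (R : RPESData E L) (t : List (Set E × Set E)) : Prop :=
  ∃ C, R.IsTraceTo t C

/-- Reachable configurations: obtained from `C0` by mixed steps. -/
inductive ReachConf (R : RPESData E L) : Set E → Prop
  | init : ReachConf R R.C0
  | step : ∀ C A B, ReachConf R C → R.Enabled C A B → ReachConf R ((C \ B) ∪ A)

/-- Forwards reachable configurations: obtained from `C0` by forward steps only. -/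
inductive FwdReachConf (R : RPESData E L) : Set E → Prop
  | init : FwdReachConf R R.C0
  | step : ∀ C A, FwdReachConf R C → R.Enabled C A ∅ → FwdReachConf R ((C \ ∅) ∪ A)

/-- The one-step removal operator: the residual of `R` after the step `A ∪ B̲`. -/
def residStep (R : RPESData E L) (A B : Set E) : RPESData E L :=
  let At : Set E := (A \ R.F) ∪ {a | a ∈ R.F ∧ ∃ x ∈ A \ R.F, R.lt a x}
  let CA : Set E := {e | e ∈ R.carrier ∧ ∃ a ∈ At, R.conf e a}
  let E' : Set E := R.carrier \ (At ∪ CA)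
  let F' : Set E := (R.F ∩ E') \
    ({e | e ∈ R.F ∧ ∃ a ∈ CA, R.rc a e} ∪ {e | e ∈ R.F ∧ ∃ a ∈ At, R.prev a e})
  { carrier := E'
    lt := fun a b => R.lt a b ∧ a ∈ E' ∧ b ∈ E'
    conf := fun a b => R.conf a b ∧ a ∈ E' ∧ b ∈ E'
    label := R.label
    F := F'
    rc := fun a b => R.rc a b ∧ a ∈ E' ∧ b ∈ F'
    prev := fun a b => R.prev a b ∧ a ∈ E' ∧ b ∈ F'
    C0 := ((R.C0 \ B) ∪ A) ∩ E' }

/-- The residual `R \ t` of `R` after a trace `t`. -/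
def resid (R : RPESData E L) (t : List (Set E × Set E)) : RPESData E L :=
  t.foldl (fun S p => S.residStep p.1 p.2) R

/-- The multiset (as a function `L → ℕ`) of action labels of the step `A ∪ B̲`. -/
noncomputable def stepLabel (R : RPESData E L) (A B : Set E) : L → ℕ :=
  fun a => Nat.card {e : E // e ∈ A ∪ B ∧ R.label e = a}

/-- Forgetting the reversibility structure. -/
def toPES (R : RPESData E L) : PESData E L :=
  ⟨R.carrier, R.lt, R.conf, R.label⟩

end RPESData

namespace PESData

variable {E : Type} {L : Type}

/-- The axioms of a prime event structure. -/
structure IsPES (P : PESData E L) : Prop where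
  countable : P.carrier.Countable
  lt_carrier : ∀ a b, P.lt a b → a ∈ P.carrier ∧ b ∈ P.carrier
  conf_carrier : ∀ a b, P.conf a b → a ∈ P.carrier ∧ b ∈ P.carrier
  lt_irrefl : ∀ a, ¬ P.lt a a
  lt_trans : ∀ a b c, P.lt a b → P.lt b c → P.lt a c
  causes_finite : ∀ e, {e' | P.lt e' e}.Finite
  conf_irrefl : ∀ a, ¬ P.conf a a
  conf_symm : ∀ a b, P.conf a b → P.conf b a
  conf_hered : ∀ a b c, P.conf a b → P.lt b c → P.conf a c

/-- `φ(E, F)`: the RPES obtained from a PES by declaring the events in `F`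
reversible, with `e ≺ e̲` for `e ∈ F` and `e ▷ e̲'` whenever `e' ∈ F`, `e' < e`. -/
def toRPES (P : PESData E L) (F : Set E) : RPESData E L :=
  { carrier := P.carrier
    lt := P.lt
    conf := P.conf
    label := P.label
    F := F
    rc := fun e u => u ∈ F ∧ e = u
    prev := fun e u => u ∈ F ∧ P.lt u e
    C0 := ∅ }

end PESData

/-- A labeled transition system. -/
structure LTS (S : Type) (Λ : Type) where
  tr : S → Λ → S → Prop
  init : S

/-- Bisimulation between labeled transition systems. -/
def IsBisimulation {S S' Λ : Type} (T : LTS S Λ) (T' : LTS S' Λ)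
    (Rl : S → S' → Prop) : Prop :=
  Rl T.init T'.init ∧
  (∀ s s', Rl s s' → ∀ M s₁, T.tr s M s₁ → ∃ s₁', T'.tr s' M s₁' ∧ Rl s₁ s₁') ∧
  (∀ s s', Rl s s' → ∀ M s₁', T'.tr s' M s₁' → ∃ s₁, T.tr s M s₁ ∧ Rl s₁ s₁')

namespace RPESData

variable {E : Type} {L : Type}

/-- Transition relation of the configuration transition system `TC(R)`. -/
def confTr (R : RPESData E L) (C : Set E) (M : L → ℕ) (C' : Set E) : Prop :=
  R.ReachConf C ∧ ∃ A B, R.Enabled C A B ∧ C' = (C \ B) ∪ A ∧ M = R.stepLabel A B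

/-- The configuration transition system `TC(R)`. -/
def TC (R : RPESData E L) : LTS (Set E) (L → ℕ) :=
  ⟨R.confTr, R.C0⟩

/-- Transition relation between residuals: `F ⇀^M F'` iff `F' = F \ (A ∪ B̲)` for
a one-step trace `A ∪ B̲` of `F` with label multiset `M`. -/
def residTr (R' : RPESData E L) (M : L → ℕ) (R'' : RPESData E L) : Prop :=
  ∃ A B, R'.Enabled R'.C0 A B ∧ R'' = R'.residStep A B ∧ M = R'.stepLabel A B

/-- Residuals reachable from `R` via `residTr`. -/
inductive ReachRes (R : RPESData E L) : RPESData E L → Prop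
  | init : ReachRes R R
  | step : ∀ R' M R'', ReachRes R R' → residTr R' M R'' → ReachRes R R''

/-- The residual transition system `TE(R)`. -/
def TE (R : RPESData E L) : LTS (RPESData E L) (L → ℕ) :=
  ⟨residTr, R⟩

end RPESData


namespace StepCorrAux

open RPESData

variable {E L : Type}

/-- The set `At` of events removed as "executed irreversible (plus their
reversible causes)" in one `residStep`. -/
def atSet (R : RPESData E L) (A : Set E) : Set E :=
  (A \ R.F) ∪ {a | a ∈ R.F ∧ ∃ x ∈ A \ R.F, R.lt a x}

/-- The set `CA` of events removed by conflict in one `residStep`. -/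
def caSet (R : RPESData E L) (A : Set E) : Set E :=
  {e | e ∈ R.carrier ∧ ∃ a ∈ atSet R A, R.conf e a}

/-- The set of events dropped from `F` in one `residStep`. -/
def fdSet (R : RPESData E L) (A : Set E) : Set E :=
  {e | e ∈ R.F ∧ ∃ a ∈ caSet R A, R.rc a e} ∪ {e | e ∈ R.F ∧ ∃ a ∈ atSet R A, R.prev a e}

lemma rs_carrier (R : RPESData E L) (A B : Set E) :
    (R.residStep A B).carrier = R.carrier \ (atSet R A ∪ caSet R A) := rfl

lemma rs_label (R : RPESData E L) (A B : Set E) :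
    (R.residStep A B).label = R.label := rfl

lemma rs_F (R : RPESData E L) (A B : Set E) :
    (R.residStep A B).F = (R.F ∩ (R.residStep A B).carrier) \ fdSet R A := rfl

lemma rs_lt (R : RPESData E L) (A B : Set E) (a b : E) :
    (R.residStep A B).lt a b ↔
      R.lt a b ∧ a ∈ (R.residStep A B).carrier ∧ b ∈ (R.residStep A B).carrier := Iff.rfl

lemma rs_conf (R : RPESData E L) (A B : Set E) (a b : E) :
    (R.residStep A B).conf a b ↔
      R.conf a b ∧ a ∈ (R.residStep A B).carrier ∧ b ∈ (R.residStep A B).carrier := Iff.rfl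

lemma rs_rc (R : RPESData E L) (A B : Set E) (a b : E) :
    (R.residStep A B).rc a b ↔
      R.rc a b ∧ a ∈ (R.residStep A B).carrier ∧ b ∈ (R.residStep A B).F := Iff.rfl

lemma rs_prev (R : RPESData E L) (A B : Set E) (a b : E) :
    (R.residStep A B).prev a b ↔
      R.prev a b ∧ a ∈ (R.residStep A B).carrier ∧ b ∈ (R.residStep A B).F := Iff.rfl

lemma rs_C0 (R : RPESData E L) (A B : Set E) :
    (R.residStep A B).C0 = ((R.C0 \ B) ∪ A) ∩ (R.residStep A B).carrier := rfl

/-- The invariant relating the residual `R'` of `R` after a trace whose final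
configuration is `C`, where `Dt` is the cumulative set of events deleted as
"executed" (irreversible events together with their stuck reversible causes). -/
structure Inv (R R' : RPESData E L) (C Dt : Set E) : Prop where
  carrier_sub : R'.carrier ⊆ R.carrier
  lt_iff : ∀ a b, R'.lt a b ↔ R.lt a b ∧ a ∈ R'.carrier ∧ b ∈ R'.carrier
  conf_iff : ∀ a b, R'.conf a b ↔ R.conf a b ∧ a ∈ R'.carrier ∧ b ∈ R'.carrier
  rc_iff : ∀ a b, R'.rc a b ↔ R.rc a b ∧ a ∈ R'.carrier ∧ b ∈ R'.F
  prev_iff : ∀ a b, R'.prev a b ↔ R.prev a b ∧ a ∈ R'.carrier ∧ b ∈ R'.F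
  label_eq : R'.label = R.label
  F_sub : R'.F ⊆ R.F ∩ R'.carrier
  C0_eq : R'.C0 = C ∩ R'.carrier
  dt_sub : Dt ⊆ C
  dt_del : ∀ a ∈ Dt, a ∉ R'.carrier
  del_char : ∀ e ∈ R.carrier, e ∉ R'.carrier → e ∈ Dt ∨ ∃ d ∈ Dt, R.conf e d
  no_conf : ∀ e ∈ R'.carrier, ∀ d ∈ Dt, ¬ R.conf e d
  dtF : ∀ a ∈ Dt, a ∈ R.F →
      (∃ x ∈ Dt, R.prev x a) ∨ ∃ b d, R.rc b a ∧ d ∈ Dt ∧ R.conf b d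
  fdrop : ∀ e, e ∈ R.F → e ∈ R'.carrier → e ∉ R'.F →
      (∃ a d, R.rc a e ∧ d ∈ Dt ∧ R.conf a d) ∨ ∃ a ∈ Dt, R.prev a e
  rc_ok : ∀ e ∈ R'.F, ∀ a, R.rc a e → ∀ d ∈ Dt, ¬ R.conf a d
  prev_ok : ∀ e ∈ R'.F, ∀ a ∈ Dt, ¬ R.prev a e
  C_sub : C ⊆ R.carrier
  C_cf : R.ConflictFree C

lemma inv_init {R : RPESData E L} (h : R.IsRPES) : Inv R R R.C0 ∅ where
  carrier_sub := subset_refl _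
  lt_iff a b := ⟨fun hl => ⟨hl, (h.lt_carrier a b hl).1, (h.lt_carrier a b hl).2⟩, And.left⟩
  conf_iff a b := ⟨fun hl => ⟨hl, (h.conf_carrier a b hl).1, (h.conf_carrier a b hl).2⟩, And.left⟩
  rc_iff a b := ⟨fun hl => ⟨hl, (h.rc_carrier a b hl).1, (h.rc_carrier a b hl).2⟩, And.left⟩
  prev_iff a b := ⟨fun hl => ⟨hl, (h.prev_carrier a b hl).1, (h.prev_carrier a b hl).2⟩, And.left⟩
  label_eq := rfl
  F_sub := fun e he => ⟨he, h.F_carrier he⟩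
  C0_eq := (Set.inter_eq_left.mpr h.C0_carrier).symm
  dt_sub := Set.empty_subset _
  dt_del := fun a ha => absurd ha (Set.notMem_empty a)
  del_char := fun e he hne => absurd he hne
  no_conf := fun _ _ d hd => absurd hd (Set.notMem_empty d)
  dtF := fun a ha => absurd ha (Set.notMem_empty a)
  fdrop := fun _ h1 h2 h3 => absurd h1 (by
    intro hF
    exact h3 hF)
  rc_ok := fun _ _ _ _ d hd => absurd hd (Set.notMem_empty d)
  prev_ok := fun _ _ a ha => absurd ha (Set.notMem_empty a)
  C_sub := h.C0_carrier
  C_cf := h.C0_cf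

/-- Forward transfer: a step enabled at `C` in `R` is enabled at the initial
configuration of the residual `R'`. -/
lemma fwd {R R' : RPESData E L} {C Dt A B : Set E}
    (inv : Inv R R' C Dt) (hE : R.Enabled C A B) :
    R'.Enabled R'.C0 A B := by
  obtain ⟨hAf, hBf, hAc, hBF, hAC, hBC, hcf, hlt, hrc, hprev⟩ := hE
  have hAC' : ∀ a ∈ A, a ∉ C := fun a ha hc =>
    Set.eq_empty_iff_forall_notMem.mp hAC a ⟨ha, hc⟩
  have hAsub : A ⊆ R'.carrier := by
    intro a ha
    by_contra hna
    rcases inv.del_char a (hAc ha) hna with hd | ⟨d, hd, hcd⟩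
    · exact hAC' a ha (inv.dt_sub hd)
    · exact hcf a (Or.inr ha) d (Or.inl (inv.dt_sub hd)) hcd
  have hBcar : B ⊆ R'.carrier := by
    intro b hb
    by_contra hnb
    rcases inv.del_char b (inv.C_sub (hBC hb)) hnb with hd | ⟨d, hd, hcd⟩
    · rcases inv.dtF b hd (hBF hb) with ⟨x, hx, hpx⟩ | ⟨b', d', hrcb, hd', hcb⟩
      · exact hprev b hb x hpx (Or.inl (inv.dt_sub hx))
      · exact inv.C_cf b' (hrc b hb b' hrcb).1 d' (inv.dt_sub hd') hcb
    · exact inv.C_cf b (hBC hb) d (inv.dt_sub hd) hcd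
  have hBsub : B ⊆ R'.F := by
    intro b hb
    by_contra hnb
    rcases inv.fdrop b (hBF hb) (hBcar hb) hnb with ⟨a, d, hra, hd, hcad⟩ | ⟨a, ha, hpa⟩
    · exact inv.C_cf a (hrc b hb a hra).1 d (inv.dt_sub hd) hcad
    · exact hprev b hb a hpa (Or.inl (inv.dt_sub ha))
  refine ⟨hAf, hBf, hAsub, hBsub, ?_, ?_, ?_, ?_, ?_, ?_⟩
  · rw [inv.C0_eq]
    ext a
    simp only [Set.mem_inter_iff, Set.mem_empty_iff_false, iff_false, not_and]
    intro ha hc _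
    exact hAC' a ha hc
  · rw [inv.C0_eq]
    exact fun b hb => ⟨hBC hb, hBcar hb⟩
  · intro e he e' he' hconf
    have hconfR := ((inv.conf_iff e e').mp hconf).1
    have hm : ∀ x, x ∈ R'.C0 ∪ A → x ∈ C ∪ A := by
      intro x hx
      rcases hx with hx | hx
      · exact Or.inl (inv.C0_eq ▸ hx : x ∈ C ∩ R'.carrier).1
      · exact Or.inr hx
    exact hcf e (hm e he) e' (hm e' he') hconfR
  · intro e he e' hlt'
    have hm := (inv.lt_iff e' e).mp hlt'
    have h8 := hlt e he e' hm.1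
    rw [inv.C0_eq]
    exact ⟨⟨h8.1, hm.2.1⟩, h8.2⟩
  · intro e he e' hrc'
    have hm := (inv.rc_iff e' e).mp hrc'
    have h9 := hrc e he e' hm.1
    rw [inv.C0_eq]
    exact ⟨⟨h9.1, hm.2.1⟩, h9.2⟩
  · intro e he e' hp' hmem
    apply hprev e he e' ((inv.prev_iff e' e).mp hp').1
    rcases hmem with hm | hm
    · exact Or.inl (inv.C0_eq ▸ hm : e' ∈ C ∩ R'.carrier).1
    · exact Or.inr hm

/-- Backward transfer: a step enabled at the initial configuration of the
residual `R'` is enabled at `C` in `R`. -/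
lemma bwd {R R' : RPESData E L} {C Dt A B : Set E} (h : R.IsRPES)
    (hcr : R.CauseRespecting) (inv : Inv R R' C Dt) (hE : R'.Enabled R'.C0 A B) :
    R.Enabled C A B := by
  obtain ⟨hAf, hBf, hAc, hBF, hAC, hBC, hcf, hlt, hrc, hprev⟩ := hE
  have hBF' : B ⊆ R.F := fun b hb => (inv.F_sub (hBF hb)).1
  have hBcar : B ⊆ R'.carrier := fun b hb => (inv.F_sub (hBF hb)).2
  refine ⟨hAf, hBf, fun a ha => inv.carrier_sub (hAc ha), hBF', ?_, ?_, ?_, ?_, ?_, ?_⟩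
  · ext a
    simp only [Set.mem_inter_iff, Set.mem_empty_iff_false, iff_false, not_and]
    intro ha hc
    exact Set.eq_empty_iff_forall_notMem.mp hAC a ⟨ha, inv.C0_eq ▸ (⟨hc, hAc ha⟩ : a ∈ C ∩ R'.carrier)⟩
  · exact fun b hb => (inv.C0_eq ▸ hBC hb : b ∈ C ∩ R'.carrier).1
  · -- conflict-freeness of C ∪ A in R
    intro e he e' he' hconf
    have hmem : ∀ x ∈ C ∪ A, x ∈ R'.carrier → x ∈ R'.C0 ∪ A := by
      intro x hx hxc
      rcases hx with hx | hx
      · exact Or.inl (inv.C0_eq ▸ (⟨hx, hxc⟩ : x ∈ C ∩ R'.carrier))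
      · exact Or.inr hx
    rcases he with heC | heA
    · rcases he' with he'C | he'A
      · exact inv.C_cf e heC e' he'C hconf
      · by_cases hec : e ∈ R'.carrier
        · exact hcf e (hmem e (Or.inl heC) hec) e' (hmem e' (Or.inr he'A) (hAc he'A))
            ((inv.conf_iff e e').mpr ⟨hconf, hec, hAc he'A⟩)
        · rcases inv.del_char e (inv.C_sub heC) hec with hd | ⟨d, hd, hcd⟩
          · exact inv.no_conf e' (hAc he'A) e hd (h.conf_symm e e' hconf)
          · exact inv.C_cf e heC d (inv.dt_sub hd) hcd
    · rcases he' with he'C | he'A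
      · by_cases hec' : e' ∈ R'.carrier
        · exact hcf e (hmem e (Or.inr heA) (hAc heA)) e' (hmem e' (Or.inl he'C) hec')
            ((inv.conf_iff e e').mpr ⟨hconf, hAc heA, hec'⟩)
        · rcases inv.del_char e' (inv.C_sub he'C) hec' with hd | ⟨d, hd, hcd⟩
          · exact inv.no_conf e (hAc heA) e' hd hconf
          · exact inv.C_cf e' he'C d (inv.dt_sub hd) hcd
      · exact hcf e (hmem e (Or.inr heA) (hAc heA)) e' (hmem e' (Or.inr he'A) (hAc he'A))
          ((inv.conf_iff e e').mpr ⟨hconf, hAc heA, hAc he'A⟩)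
  · -- causes of events in A
    intro e he e' hlte
    by_cases hc : e' ∈ R'.carrier
    · have h8 := hlt e he e' ((inv.lt_iff e' e).mpr ⟨hlte, hc, hAc he⟩)
      exact ⟨(inv.C0_eq ▸ h8.1 : e' ∈ C ∩ R'.carrier).1, h8.2⟩
    · rcases inv.del_char e' (h.lt_carrier e' e hlte).1 hc with hd | ⟨d, hd, hcd⟩
      · exact ⟨inv.dt_sub hd, fun hb => hc (hBcar hb)⟩
      · exact absurd (h.conf_symm d e (h.conf_hered_sc d e' e (h.conf_symm e' d hcd)
          (hcr e' e hlte))) (inv.no_conf e (hAc he) d hd)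
  · -- reverse causes of events in B
    intro e he e' hrce
    by_cases hc : e' ∈ R'.carrier
    · have h9 := hrc e he e' ((inv.rc_iff e' e).mpr ⟨hrce, hc, hBF he⟩)
      exact ⟨(inv.C0_eq ▸ h9.1 : e' ∈ C ∩ R'.carrier).1, h9.2⟩
    · rcases inv.del_char e' (h.rc_carrier e' e hrce).1 hc with hd | ⟨d, hd, hcd⟩
      · exact ⟨inv.dt_sub hd, fun hmem => hc (hBcar hmem.1)⟩
      · exact absurd hcd (inv.rc_ok e (hBF he) e' hrce d hd)
  · -- prevention
    intro e he e' hpe hmem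
    by_cases hc : e' ∈ R'.carrier
    · apply hprev e he e' ((inv.prev_iff e' e).mpr ⟨hpe, hc, hBF he⟩)
      rcases hmem with hm | hm
      · exact Or.inl (inv.C0_eq ▸ (⟨hm, hc⟩ : e' ∈ C ∩ R'.carrier))
      · exact Or.inr hm
    · rcases hmem with hm | hm
      · rcases inv.del_char e' (inv.C_sub hm) hc with hd | ⟨d, hd, hcd⟩
        · exact inv.prev_ok e (hBF he) e' hd hpe
        · exact inv.C_cf e' hm d (inv.dt_sub hd) hcd
      · exact hc (hAc hm)

/-- Invariant preservation along one step of a trace. -/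
lemma inv_step {R R' : RPESData E L} {C Dt A B : Set E} (h : R.IsRPES)
    (hcr : R.CauseRespecting) (inv : Inv R R' C Dt) (hE : R.Enabled C A B) :
    Inv R (R'.residStep A B) ((C \ B) ∪ A) (Dt ∪ atSet R' A) := by
  have hE' := fwd inv hE
  obtain ⟨hAf, hBf, hAc, hBF, hAC, hBC, hcf, hlt, hrc, hprev⟩ := hE
  have hAsub : A ⊆ R'.carrier := hE'.2.2.1
  have hBsub : B ⊆ R'.F := hE'.2.2.2.1
  set R'' := R'.residStep A B with hR''
  have memE2 : ∀ e, e ∈ R''.carrier ↔ e ∈ R'.carrier ∧ e ∉ atSet R' A ∧ e ∉ caSet R' A := by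
    intro e
    rw [hR'', rs_carrier]
    constructor
    · rintro ⟨h1, h2⟩
      exact ⟨h1, fun hx => h2 (Or.inl hx), fun hx => h2 (Or.inr hx)⟩
    · rintro ⟨h1, h2, h3⟩
      exact ⟨h1, fun hx => hx.elim h2 h3⟩
  have memF2 : ∀ e, e ∈ R''.F ↔ (e ∈ R'.F ∧ e ∈ R''.carrier) ∧ e ∉ fdSet R' A := by
    intro e
    rw [hR'', rs_F]
    exact Iff.rfl
  have sub2 : R''.carrier ⊆ R'.carrier := fun e he => ((memE2 e).mp he).1
  have hF2sub : R''.F ⊆ R'.F := fun e he => ((memF2 e).mp he).1.1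
  have hAtC : atSet R' A ⊆ (C \ B) ∪ A := by
    rintro a (⟨haA, _⟩ | ⟨haF, x, hx, hlt'⟩)
    · exact Or.inr haA
    · exact Or.inl (hlt x hx.1 a ((inv.lt_iff a x).mp hlt').1)
  have hAtcar : atSet R' A ⊆ R'.carrier := by
    rintro a (⟨haA, _⟩ | ⟨haF, x, hx, hlt'⟩)
    · exact hAsub haA
    · exact ((inv.lt_iff a x).mp hlt').2.1
  have hBdis : ∀ b ∈ B, b ∉ Dt := fun b hb hd =>
    inv.dt_del b hd ((inv.F_sub (hBsub hb)).2)
  have hDt2C : Dt ∪ atSet R' A ⊆ (C \ B) ∪ A := by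
    rintro a (hd | ha)
    · exact Or.inl ⟨inv.dt_sub hd, fun hb => hBdis a hb hd⟩
    · exact hAtC ha
  have hCnew_cf : R.ConflictFree ((C \ B) ∪ A) := by
    intro e he e' he' hconf
    have lift : ∀ x, x ∈ (C \ B) ∪ A → x ∈ C ∪ A := by
      rintro x (hx | hx)
      · exact Or.inl hx.1
      · exact Or.inr hx
    exact hcf e (lift e he) e' (lift e' he') hconf
  refine ⟨?_, ?_, ?_, ?_, ?_, ?_, ?_, ?_, hDt2C, ?_, ?_, ?_, ?_, ?_, ?_, ?_, ?_, hCnew_cf⟩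
  · exact fun e he => inv.carrier_sub (sub2 he)
  · intro a b
    rw [hR'', rs_lt, inv.lt_iff]
    constructor
    · rintro ⟨⟨h1, _, _⟩, h2, h3⟩
      exact ⟨h1, h2, h3⟩
    · rintro ⟨h1, h2, h3⟩
      exact ⟨⟨h1, sub2 h2, sub2 h3⟩, h2, h3⟩
  · intro a b
    rw [hR'', rs_conf, inv.conf_iff]
    constructor
    · rintro ⟨⟨h1, _, _⟩, h2, h3⟩
      exact ⟨h1, h2, h3⟩
    · rintro ⟨h1, h2, h3⟩
      exact ⟨⟨h1, sub2 h2, sub2 h3⟩, h2, h3⟩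
  · intro a b
    rw [hR'', rs_rc, inv.rc_iff]
    constructor
    · rintro ⟨⟨h1, _, _⟩, h2, h3⟩
      exact ⟨h1, h2, h3⟩
    · rintro ⟨h1, h2, h3⟩
      exact ⟨⟨h1, sub2 h2, hF2sub h3⟩, h2, h3⟩
  · intro a b
    rw [hR'', rs_prev, inv.prev_iff]
    constructor
    · rintro ⟨⟨h1, _, _⟩, h2, h3⟩
      exact ⟨h1, h2, h3⟩
    · rintro ⟨h1, h2, h3⟩
      exact ⟨⟨h1, sub2 h2, hF2sub h3⟩, h2, h3⟩
  · rw [hR'', rs_label, inv.label_eq]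
  · intro e he
    exact ⟨(inv.F_sub (hF2sub he)).1, ((memF2 e).mp he).1.2⟩
  · rw [hR'', rs_C0, inv.C0_eq]
    ext e
    constructor
    · rintro ⟨hm, he2⟩
      refine ⟨?_, he2⟩
      rcases hm with ⟨⟨hC, _⟩, hB⟩ | hA
      · exact Or.inl ⟨hC, hB⟩
      · exact Or.inr hA
    · rintro ⟨hm, he2⟩
      refine ⟨?_, he2⟩
      rcases hm with ⟨hC, hB⟩ | hA
      · exact Or.inl ⟨⟨hC, sub2 he2⟩, hB⟩
      · exact Or.inr hA
  · rintro a (hd | ha) hmem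
    · exact inv.dt_del a hd (sub2 hmem)
    · exact ((memE2 a).mp hmem).2.1 ha
  · intro e he hne
    by_cases hc : e ∈ R'.carrier
    · have : e ∈ atSet R' A ∨ e ∈ caSet R' A := by
        by_contra hcon
        push_neg at hcon
        exact hne ((memE2 e).mpr ⟨hc, hcon.1, hcon.2⟩)
      rcases this with hx | ⟨_, a, ha, hconf'⟩
      · exact Or.inl (Or.inr hx)
      · exact Or.inr ⟨a, Or.inr ha, ((inv.conf_iff e a).mp hconf').1⟩
    · rcases inv.del_char e he hc with hd | ⟨d, hd, hcd⟩
      · exact Or.inl (Or.inl hd)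
      · exact Or.inr ⟨d, Or.inl hd, hcd⟩
  · rintro e he d (hd | hd) hconf
    · exact inv.no_conf e (sub2 he) d hd hconf
    · exact ((memE2 e).mp he).2.2 ⟨sub2 he, d, hd, (inv.conf_iff e d).mpr ⟨hconf, sub2 he, hAtcar hd⟩⟩
  · rintro a (hd | ha) haF
    · rcases inv.dtF a hd haF with ⟨x, hx, hpx⟩ | ⟨b, d, hrcb, hd', hcb⟩
      · exact Or.inl ⟨x, Or.inl hx, hpx⟩
      · exact Or.inr ⟨b, d, hrcb, Or.inl hd', hcb⟩
    · rcases ha with ⟨haA, hnF⟩ | ⟨haF', x, hx, hlt'⟩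
      · rcases inv.fdrop a haF (hAsub haA) hnF with ⟨b, d, hrcb, hd', hcb⟩ | ⟨x, hx, hpx⟩
        · exact Or.inr ⟨b, d, hrcb, Or.inl hd', hcb⟩
        · exact Or.inl ⟨x, Or.inl hx, hpx⟩
      · refine Or.inl ⟨x, Or.inr (Or.inl hx), ?_⟩
        exact (hcr a x ((inv.lt_iff a x).mp hlt').1).2 haF
  · intro e heF hcar hne
    by_cases hF' : e ∈ R'.F
    · have hFd : e ∈ fdSet R' A := by
        by_contra hf
        exact hne ((memF2 e).mpr ⟨⟨hF', hcar⟩, hf⟩)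
      rcases hFd with ⟨_, a, haCA, hrc'⟩ | ⟨_, a, haAt, hp'⟩
      · obtain ⟨_, d, hdAt, hconf'⟩ := haCA
        exact Or.inl ⟨a, d, ((inv.rc_iff a e).mp hrc').1, Or.inr hdAt,
          ((inv.conf_iff a d).mp hconf').1⟩
      · exact Or.inr ⟨a, Or.inr haAt, ((inv.prev_iff a e).mp hp').1⟩
    · rcases inv.fdrop e heF (sub2 hcar) hF' with ⟨a, d, hrcb, hd', hcb⟩ | ⟨a, ha, hpa⟩
      · exact Or.inl ⟨a, d, hrcb, Or.inl hd', hcb⟩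
      · exact Or.inr ⟨a, Or.inl ha, hpa⟩
  · rintro e he a hrca d (hd | hd) hconf
    · exact inv.rc_ok e (hF2sub he) a hrca d hd hconf
    · by_cases hac : a ∈ R'.carrier
      · have haCA : a ∈ caSet R' A :=
          ⟨hac, d, hd, (inv.conf_iff a d).mpr ⟨hconf, hac, hAtcar hd⟩⟩
        exact ((memF2 e).mp he).2 (Or.inl ⟨hF2sub he, a, haCA,
          (inv.rc_iff a e).mpr ⟨hrca, hac, hF2sub he⟩⟩)
      · rcases inv.del_char a (h.rc_carrier a e hrca).1 hac with haDt | ⟨d', hd', hc'⟩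
        · have hamem : a ∈ (C \ B) ∪ A :=
            Or.inl ⟨inv.dt_sub haDt, fun hb => inv.dt_del a haDt ((inv.F_sub (hBsub hb)).2)⟩
          exact hCnew_cf a hamem d (hAtC hd) hconf
        · exact inv.rc_ok e (hF2sub he) a hrca d' hd' hc'
  · rintro e he a (hd | hd) hp
    · exact inv.prev_ok e (hF2sub he) a hd hp
    · exact ((memF2 e).mp he).2 (Or.inr ⟨hF2sub he, a, hd,
        (inv.prev_iff a e).mpr ⟨hp, hAtcar hd, hF2sub he⟩⟩)
  · rintro e (he | he)
    · exact inv.C_sub he.1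
    · exact hAc he

lemma traceFrom_snoc {R : RPESData E L} :
    ∀ (t : List (Set E × Set E)) (C C' A B : Set E),
      R.IsTraceFrom C t C' → R.Enabled C' A B →
      R.IsTraceFrom C (t ++ [(A, B)]) ((C' \ B) ∪ A)
  | [], C, C', A, B, ht, hE => by
      cases ht
      exact ⟨hE, rfl⟩
  | p :: t, C, C', A, B, ht, hE =>
      ⟨ht.1, traceFrom_snoc t _ _ A B ht.2 hE⟩

lemma reach_of_traceFrom {R : RPESData E L} :
    ∀ (t : List (Set E × Set E)) (C C' : Set E),
      R.ReachConf C → R.IsTraceFrom C t C' → R.ReachConf C'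
  | [], C, C', hr, ht => by cases ht; exact hr
  | p :: t, C, C', hr, ht =>
      reach_of_traceFrom t _ _ (RPESData.ReachConf.step C p.1 p.2 hr ht.1) ht.2

lemma inv_of_trace {R : RPESData E L} (h : R.IsRPES) (hcr : R.CauseRespecting)
    {t : List (Set E × Set E)} {C : Set E} (ht : R.IsTraceTo t C) :
    ∃ Dt, Inv R (R.resid t) C Dt := by
  suffices main : ∀ (t : List (Set E × Set E)) (R' : RPESData E L) (C₀ C : Set E) (Dt : Set E),
      Inv R R' C₀ Dt → R.IsTraceFrom C₀ t C →
      ∃ Dt', Inv R (t.foldl (fun S p => S.residStep p.1 p.2) R') C Dt' from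
    main t R R.C0 C ∅ (inv_init h) ht
  intro t
  induction t with
  | nil =>
    intro R' C₀ C Dt inv ht
    cases ht
    exact ⟨Dt, inv⟩
  | cons p t ih =>
    intro R' C₀ C Dt inv ht
    exact ih (R'.residStep p.1 p.2) _ _ _ (inv_step h hcr inv ht.1) ht.2

lemma stepLabel_congr {R R' : RPESData E L} (hl : R'.label = R.label) (A B : Set E) :
    R'.stepLabel A B = R.stepLabel A B := by
  unfold RPESData.stepLabel
  rw [hl]

lemma resid_snoc (R : RPESData E L) (t : List (Set E × Set E)) (A B : Set E) :
    R.resid (t ++ [(A, B)]) = (R.resid t).residStep A B := by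
  simp [RPESData.resid]

end StepCorrAux

/-- Step correspondence between configuration and residual
transitions in a cause-respecting RPES: a configuration step
`last(t) ⇁^{l(A∪B̲)} last(t')` induces the residual step
`R \ t ⇀^{l(A∪B̲)} R \ (t(A∪B̲))` with `last(t(A∪B̲)) = last(t')`, and
conversely. -/
theorem step_correspondence {E L : Type} (R : RPESData E L) (h : R.IsRPES)
    (hcr : R.CauseRespecting) :
    (∀ (t t' : List (Set E × Set E)) (C C' A B : Set E), R.IsTraceTo t C → R.IsTraceTo t' C' →
      R.Enabled C A B → C' = (C \ B) ∪ A →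
      RPESData.residTr (R.resid t) (R.stepLabel A B) (R.resid (t ++ [(A, B)])) ∧
      R.IsTraceTo (t ++ [(A, B)]) C') ∧
    (∀ (t : List (Set E × Set E)) (C : Set E) (R'' : RPESData E L) (M : L → ℕ), R.IsTraceTo t C →
      RPESData.residTr (R.resid t) M R'' →
      ∃ (t' : List (Set E × Set E)) (C' : Set E), R.IsTraceTo t' C' ∧ R'' = R.resid t' ∧
        R.confTr C M C') := by
  constructor
  · intro t t' C C' A B ht ht' hE hC'
    obtain ⟨Dt, inv⟩ := StepCorrAux.inv_of_trace h hcr ht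
    refine ⟨⟨A, B, StepCorrAux.fwd inv hE, StepCorrAux.resid_snoc R t A B, ?_⟩, ?_⟩
    · exact (StepCorrAux.stepLabel_congr inv.label_eq A B).symm
    · rw [hC']
      exact StepCorrAux.traceFrom_snoc t R.C0 C A B ht hE
  · intro t C R'' M ht hres
    obtain ⟨Dt, inv⟩ := StepCorrAux.inv_of_trace h hcr ht
    obtain ⟨A, B, hE', hR'', hM⟩ := hres
    have hE := StepCorrAux.bwd h hcr inv hE'
    refine ⟨t ++ [(A, B)], (C \ B) ∪ A,
      StepCorrAux.traceFrom_snoc t R.C0 C A B ht hE, ?_, ?_⟩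
    · rw [hR'', StepCorrAux.resid_snoc]
    · refine ⟨StepCorrAux.reach_of_traceFrom t R.C0 C RPESData.ReachConf.init ht,
        A, B, hE, rfl, ?_⟩
      rw [hM]
      exact StepCorrAux.stepLabel_congr inv.label_eq A B
end

section
/- For any cause-respecting RPES E over L, the configuration transition system TC(E) and the residual transition system TE(E) are bisimilar, via the relation R = {(last(t), E \ t) | t ∈ Traces(E)}. -/
namespace RPESData

variable {E : Type} {L : Type}

/-- Auxiliary: the set `A♯` of permanently executed events of a step. -/
def Atd (R : RPESData E L) (A : Set E) : Set E :=
  (A \ R.F) ∪ {a | a ∈ R.F ∧ ∃ x ∈ A \ R.F, R.lt a x}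

/-- Auxiliary: events in conflict with `A♯`. -/
def CAd (R : RPESData E L) (A : Set E) : Set E :=
  {e | e ∈ R.carrier ∧ ∃ a ∈ R.Atd A, R.conf e a}

/-- Carrier of a one-step residual. -/
def rsCar (R : RPESData E L) (A : Set E) : Set E :=
  R.carrier \ (R.Atd A ∪ R.CAd A)

def rsXrc (R : RPESData E L) (A : Set E) : Set E :=
  {e | e ∈ R.F ∧ ∃ a ∈ R.CAd A, R.rc a e}

def rsXprev (R : RPESData E L) (A : Set E) : Set E :=
  {e | e ∈ R.F ∧ ∃ a ∈ R.Atd A, R.prev a e}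

def rsF (R : RPESData E L) (A : Set E) : Set E :=
  (R.F ∩ R.rsCar A) \ (R.rsXrc A ∪ R.rsXprev A)

lemma residStep_carrier (R : RPESData E L) (A B : Set E) :
    (R.residStep A B).carrier = R.rsCar A := rfl

lemma residStep_lt (R : RPESData E L) (A B : Set E) :
    (R.residStep A B).lt = fun a b => R.lt a b ∧ a ∈ R.rsCar A ∧ b ∈ R.rsCar A := rfl

lemma residStep_conf (R : RPESData E L) (A B : Set E) :
    (R.residStep A B).conf = fun a b => R.conf a b ∧ a ∈ R.rsCar A ∧ b ∈ R.rsCar A := rfl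

lemma residStep_label (R : RPESData E L) (A B : Set E) :
    (R.residStep A B).label = R.label := rfl

lemma residStep_F (R : RPESData E L) (A B : Set E) :
    (R.residStep A B).F = R.rsF A := rfl

lemma residStep_rc (R : RPESData E L) (A B : Set E) :
    (R.residStep A B).rc = fun a b => R.rc a b ∧ a ∈ R.rsCar A ∧ b ∈ R.rsF A := rfl

lemma residStep_prev (R : RPESData E L) (A B : Set E) :
    (R.residStep A B).prev = fun a b => R.prev a b ∧ a ∈ R.rsCar A ∧ b ∈ R.rsF A := rfl

lemma residStep_C0 (R : RPESData E L) (A B : Set E) :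
    (R.residStep A B).C0 = ((R.C0 \ B) ∪ A) ∩ R.rsCar A := rfl

end RPESData

namespace RPESData

variable {E : Type} {L : Type}

/-- The invariant relating a configuration `C` reached by a trace `t` to the
residual `R \ t`. -/
structure Inv (R : RPESData E L) (C : Set E) (R' : RPESData E L) : Prop where
  car_sub : R'.carrier ⊆ R.carrier
  lt_iff : ∀ a b, R'.lt a b ↔ R.lt a b ∧ a ∈ R'.carrier ∧ b ∈ R'.carrier
  conf_iff : ∀ a b, R'.conf a b ↔ R.conf a b ∧ a ∈ R'.carrier ∧ b ∈ R'.carrier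
  label_eq : R'.label = R.label
  F_sub : R'.F ⊆ R.F ∩ R'.carrier
  rc_iff : ∀ a b, R'.rc a b ↔ R.rc a b ∧ a ∈ R'.carrier ∧ b ∈ R'.F
  prev_iff : ∀ a b, R'.prev a b ↔ R.prev a b ∧ a ∈ R'.carrier ∧ b ∈ R'.F
  C0_eq : R'.C0 = C ∩ R'.carrier
  C_sub : C ⊆ R.carrier
  C_cf : R.ConflictFree C
  del_mem : ∀ e ∈ R.carrier, e ∉ R'.carrier →
    e ∈ C ∨ ∃ d, d ∈ C ∧ d ∉ R'.carrier ∧ R.conf e d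
  del_conf : ∀ x ∈ C, x ∉ R'.carrier → ∀ y ∈ R'.carrier, ¬ R.conf x y
  unrev : ∀ e ∈ R.F, e ∉ R'.F →
    (∃ a, a ∈ C ∧ a ∉ R'.carrier ∧ R.prev a e) ∨
    (∃ a d, R.rc a e ∧ d ∈ C ∧ d ∉ R'.carrier ∧ R.conf a d)
  rc_mem : ∀ e ∈ R'.F, ∀ a, a ∉ R'.carrier → R.rc a e → a ∈ C
  prev_notMem : ∀ e ∈ R'.F, ∀ a, a ∉ R'.carrier → R.prev a e → a ∉ C

lemma inv_init {R : RPESData E L} (h : R.IsRPES) : Inv R R.C0 R where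
  car_sub := le_refl _
  lt_iff a b := ⟨fun hl => ⟨hl, (h.lt_carrier a b hl).1, (h.lt_carrier a b hl).2⟩, fun hl => hl.1⟩
  conf_iff a b := ⟨fun hl => ⟨hl, (h.conf_carrier a b hl).1, (h.conf_carrier a b hl).2⟩, fun hl => hl.1⟩
  label_eq := rfl
  F_sub e he := ⟨he, h.F_carrier he⟩
  rc_iff a b := ⟨fun hl => ⟨hl, (h.rc_carrier a b hl).1, (h.rc_carrier a b hl).2⟩, fun hl => hl.1⟩
  prev_iff a b := ⟨fun hl => ⟨hl, (h.prev_carrier a b hl).1, (h.prev_carrier a b hl).2⟩, fun hl => hl.1⟩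
  C0_eq := (Set.inter_eq_left.mpr h.C0_carrier).symm
  C_sub := h.C0_carrier
  C_cf := h.C0_cf
  del_mem e he hne := absurd he hne
  del_conf x hxC hx _ _ _ := absurd (h.C0_carrier hxC) hx
  unrev e he hne := absurd he hne
  rc_mem e _ a ha hrc := absurd (h.rc_carrier a e hrc).1 ha
  prev_notMem e _ a ha hp := absurd (h.prev_carrier a e hp).1 ha

end RPESData

namespace RPESData

variable {E : Type} {L : Type} {R R' : RPESData E L} {C A B : Set E}

lemma enabled_to (h : R.IsRPES) (inv : Inv R C R') (hen : R.Enabled C A B) :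
    R'.Enabled (C ∩ R'.carrier) A B := by
  obtain ⟨hAf, hBf, hAc, hBF, hAC, hBC, hcf, hca, hrca, hpr⟩ := hen
  have hA' : A ⊆ R'.carrier := by
    intro e he
    by_contra hne
    rcases inv.del_mem e (hAc he) hne with hC | ⟨d, hdC, _, hconf⟩
    · have : e ∈ A ∩ C := ⟨he, hC⟩
      rw [hAC] at this
      exact this
    · exact hcf e (Set.mem_union_right _ he) d (Set.mem_union_left _ hdC) hconf
  have hB' : B ⊆ R'.F := by
    intro e he
    by_contra hne
    rcases inv.unrev e (hBF he) hne with ⟨a, haC, _, hp⟩ | ⟨a, d, hrc, hdC, _, hconf⟩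
    · exact hpr e he a hp (Set.mem_union_left _ haC)
    · have ha : a ∈ C \ (B \ {e}) := hrca e he a hrc
      exact hcf a (Set.mem_union_left _ ha.1) d (Set.mem_union_left _ hdC) hconf
  refine ⟨hAf, hBf, hA', hB', ?_, ?_, ?_, ?_, ?_, ?_⟩
  · apply Set.eq_empty_iff_forall_notMem.mpr
    rintro e ⟨heA, heC, -⟩
    have : e ∈ A ∩ C := ⟨heA, heC⟩
    rw [hAC] at this
    exact this
  · exact fun e he => ⟨hBC he, (inv.F_sub (hB' he)).2⟩
  · intro x hx y hy hcxy
    have hco := (inv.conf_iff x y).mp hcxy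
    refine hcf x ?_ y ?_ hco.1
    · rcases hx with hx | hx
      · exact Set.mem_union_left _ hx.1
      · exact Set.mem_union_right _ hx
    · rcases hy with hy | hy
      · exact Set.mem_union_left _ hy.1
      · exact Set.mem_union_right _ hy
  · intro e he e' hlt'
    obtain ⟨hlt, he'c, -⟩ := (inv.lt_iff e' e).mp hlt'
    have hm := hca e he e' hlt
    exact ⟨⟨hm.1, he'c⟩, hm.2⟩
  · intro e he e' hrc'
    obtain ⟨hrc, he'c, -⟩ := (inv.rc_iff e' e).mp hrc'
    have hm := hrca e he e' hrc
    exact ⟨⟨hm.1, he'c⟩, hm.2⟩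
  · intro e he e' hp'
    obtain ⟨hp, -, -⟩ := (inv.prev_iff e' e).mp hp'
    intro hmem
    apply hpr e he e' hp
    rcases hmem with hm | hm
    · exact Set.mem_union_left _ hm.1
    · exact Set.mem_union_right _ hm

lemma enabled_from (h : R.IsRPES) (hcr : R.CauseRespecting) (inv : Inv R C R')
    (hen' : R'.Enabled (C ∩ R'.carrier) A B) : R.Enabled C A B := by
  obtain ⟨hAf, hBf, hAc', hBF', hAC', hBC', hcf', hca', hrca', hpr'⟩ := hen'
  have hBF : B ⊆ R.F := fun e he => (inv.F_sub (hBF' he)).1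
  have hBcar' : B ⊆ R'.carrier := fun e he => (inv.F_sub (hBF' he)).2
  refine ⟨hAf, hBf, fun e he => inv.car_sub (hAc' he), hBF, ?_,
    fun e he => (hBC' he).1, ?_, ?_, ?_, ?_⟩
  · apply Set.eq_empty_iff_forall_notMem.mpr
    rintro e ⟨heA, heC⟩
    have : e ∈ A ∩ (C ∩ R'.carrier) := ⟨heA, heC, hAc' heA⟩
    rw [hAC'] at this
    exact this
  · -- conflict-freeness of C ∪ A
    intro x hx y hy hconf
    rcases hx with hx | hx <;> rcases hy with hy | hy
    · exact inv.C_cf x hx y hy hconf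
    · by_cases hx' : x ∈ R'.carrier
      · exact hcf' x (Set.mem_union_left _ ⟨hx, hx'⟩) y (Set.mem_union_right _ hy)
          ((inv.conf_iff x y).mpr ⟨hconf, hx', hAc' hy⟩)
      · exact inv.del_conf x hx hx' y (hAc' hy) hconf
    · by_cases hy' : y ∈ R'.carrier
      · exact hcf' y (Set.mem_union_left _ ⟨hy, hy'⟩) x (Set.mem_union_right _ hx)
          ((inv.conf_iff y x).mpr ⟨h.conf_symm x y hconf, hy', hAc' hx⟩)
      · exact inv.del_conf y hy hy' x (hAc' hx) (h.conf_symm x y hconf)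
    · exact hcf' x (Set.mem_union_right _ hx) y (Set.mem_union_right _ hy)
        ((inv.conf_iff x y).mpr ⟨hconf, hAc' hx, hAc' hy⟩)
  · -- causes
    intro e he e' hlt
    by_cases hc : e' ∈ R'.carrier
    · have hm := hca' e he e' ((inv.lt_iff e' e).mpr ⟨hlt, hc, hAc' he⟩)
      exact ⟨hm.1.1, hm.2⟩
    · rcases inv.del_mem e' (h.lt_carrier e' e hlt).1 hc with hC | ⟨d, hdC, hdn, hconf⟩
      · exact ⟨hC, fun hB => hc (hBcar' hB)⟩
      · exfalso
        have hde : R.conf d e :=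
          h.conf_hered_sc d e' e (h.conf_symm e' d hconf) (hcr e' e hlt)
        exact inv.del_conf d hdC hdn e (hAc' he) hde
  · -- reverse causes
    intro e he e' hrc
    by_cases hc : e' ∈ R'.carrier
    · have hm := hrca' e he e' ((inv.rc_iff e' e).mpr ⟨hrc, hc, hBF' he⟩)
      exact ⟨hm.1.1, hm.2⟩
    · refine ⟨inv.rc_mem e (hBF' he) e' hc hrc, fun hB => hc (hBcar' hB.1)⟩
  · -- prevention
    intro e he e' hp hmem
    by_cases hc : e' ∈ R'.carrier
    · apply hpr' e he e' ((inv.prev_iff e' e).mpr ⟨hp, hc, hBF' he⟩)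
      rcases hmem with hm | hm
      · exact Set.mem_union_left _ ⟨hm, hc⟩
      · exact Set.mem_union_right _ hm
    · rcases hmem with hm | hm
      · exact inv.prev_notMem e (hBF' he) e' hc hp hm
      · exact hc (hAc' hm)

end RPESData

namespace RPESData

variable {E : Type} {L : Type} {R R' : RPESData E L} {C A B : Set E}

lemma inv_step (h : R.IsRPES) (hcr : R.CauseRespecting) (inv : Inv R C R')
    (hen : R.Enabled C A B) : Inv R ((C \ B) ∪ A) (R'.residStep A B) := by
  have hen' := enabled_to h inv hen
  obtain ⟨hAf, hBf, hAc, hBF, hAC, hBC, hcf, hca, hrca, hpr⟩ := hen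
  obtain ⟨-, -, hAc', hBF', -, -, hcf', -, -, -⟩ := hen'
  set C₁ : Set E := (C \ B) ∪ A with hC₁
  have hBcar' : B ⊆ R'.carrier := fun e he => (inv.F_sub (hBF' he)).2
  have hC₁sub : C₁ ⊆ C ∪ A := by
    rintro x (hx | hx)
    · exact Set.mem_union_left _ hx.1
    · exact Set.mem_union_right _ hx
  -- key facts about Atd and CAd
  have hAt_car : R'.Atd A ⊆ R'.carrier := by
    rintro a (ha | ha)
    · exact hAc' ha.1
    · exact (inv.F_sub ha.1).2
  have hAt_C₁ : R'.Atd A ⊆ C₁ := by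
    rintro a (ha | ha)
    · exact Set.mem_union_right _ ha.1
    · obtain ⟨haF, x, hx, hlt'⟩ := ha
      have hlt := ((inv.lt_iff a x).mp hlt').1
      exact Set.mem_union_left _ (hca x hx.1 a hlt)
  have hCA_not : ∀ e ∈ R'.CAd A, e ∉ C₁ := by
    rintro e ⟨hec, a, haAt, hconf'⟩ heC₁
    have hconf := ((inv.conf_iff e a).mp hconf').1
    exact hcf e (hC₁sub heC₁) a (hC₁sub (hAt_C₁ haAt)) hconf
  have hE2car : R'.rsCar A ⊆ R'.carrier := fun x hx => hx.1
  have hF2F : R'.rsF A ⊆ R'.F := fun x hx => hx.1.1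
  have hF2E2 : R'.rsF A ⊆ R'.rsCar A := fun x hx => hx.1.2
  have hnotB : ∀ x, x ∉ R'.carrier → x ∉ B := fun x hx hB => hx (hBcar' hB)
  have hC₁C : ∀ x ∈ C₁, x ∉ R'.carrier → x ∈ C := by
    rintro x (hx | hx) hn
    · exact hx.1
    · exact absurd (hAc' hx) hn
  have hCstay : ∀ x ∈ C, x ∉ R'.carrier → x ∈ C₁ :=
    fun x hx hn => Set.mem_union_left _ ⟨hx, hnotB x hn⟩
  have hAtnE2 : ∀ a ∈ R'.Atd A, a ∉ R'.rsCar A :=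
    fun a ha hE => hE.2 (Set.mem_union_left _ ha)
  have hCAnE2 : ∀ a ∈ R'.CAd A, a ∉ R'.rsCar A :=
    fun a ha hE => hE.2 (Set.mem_union_right _ ha)
  have hsplit : ∀ x ∈ R'.carrier, x ∉ R'.rsCar A → x ∈ R'.Atd A ∨ x ∈ R'.CAd A := by
    intro x hx hnx
    by_contra hcon
    push_neg at hcon
    exact hnx ⟨hx, fun hm => hm.elim hcon.1 hcon.2⟩
  refine ⟨?_, ?_, ?_, ?_, ?_, ?_, ?_, ?_, ?_, ?_, ?_, ?_, ?_, ?_, ?_⟩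
  · -- car_sub
    rw [residStep_carrier]
    exact fun x hx => inv.car_sub (hE2car hx)
  · -- lt_iff
    intro a b
    rw [residStep_carrier, residStep_lt]
    constructor
    · rintro ⟨hl, ha, hb⟩
      exact ⟨((inv.lt_iff a b).mp hl).1, ha, hb⟩
    · rintro ⟨hl, ha, hb⟩
      exact ⟨(inv.lt_iff a b).mpr ⟨hl, hE2car ha, hE2car hb⟩, ha, hb⟩
  · -- conf_iff
    intro a b
    rw [residStep_carrier, residStep_conf]
    constructor
    · rintro ⟨hl, ha, hb⟩
      exact ⟨((inv.conf_iff a b).mp hl).1, ha, hb⟩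
    · rintro ⟨hl, ha, hb⟩
      exact ⟨(inv.conf_iff a b).mpr ⟨hl, hE2car ha, hE2car hb⟩, ha, hb⟩
  · -- label_eq
    rw [residStep_label]; exact inv.label_eq
  · -- F_sub
    rw [residStep_F, residStep_carrier]
    exact fun x hx => ⟨(inv.F_sub (hF2F hx)).1, hF2E2 hx⟩
  · -- rc_iff
    intro a b
    rw [residStep_carrier, residStep_rc, residStep_F]
    constructor
    · rintro ⟨hl, ha, hb⟩
      exact ⟨((inv.rc_iff a b).mp hl).1, ha, hb⟩
    · rintro ⟨hl, ha, hb⟩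
      exact ⟨(inv.rc_iff a b).mpr ⟨hl, hE2car ha, hF2F hb⟩, ha, hb⟩
  · -- prev_iff
    intro a b
    rw [residStep_carrier, residStep_prev, residStep_F]
    constructor
    · rintro ⟨hl, ha, hb⟩
      exact ⟨((inv.prev_iff a b).mp hl).1, ha, hb⟩
    · rintro ⟨hl, ha, hb⟩
      exact ⟨(inv.prev_iff a b).mpr ⟨hl, hE2car ha, hF2F hb⟩, ha, hb⟩
  · -- C0_eq
    rw [residStep_C0, residStep_carrier, inv.C0_eq]
    ext x
    constructor
    · rintro ⟨hx | hx, hE⟩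
      · exact ⟨Set.mem_union_left _ ⟨hx.1.1, hx.2⟩, hE⟩
      · exact ⟨Set.mem_union_right _ hx, hE⟩
    · rintro ⟨hx | hx, hE⟩
      · exact ⟨Set.mem_union_left _ ⟨⟨hx.1, hE2car hE⟩, hx.2⟩, hE⟩
      · exact ⟨Set.mem_union_right _ hx, hE⟩
  · -- C_sub
    rintro x (hx | hx)
    · exact inv.C_sub hx.1
    · exact hAc hx
  · -- C_cf
    exact fun x hx y hy => hcf x (hC₁sub hx) y (hC₁sub hy)
  · -- del_mem
    rw [residStep_carrier]
    intro e hec hne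
    by_cases hc : e ∈ R'.carrier
    · rcases hsplit e hc hne with hAt | hCA
      · exact Or.inl (hAt_C₁ hAt)
      · obtain ⟨-, a, haAt, hconf'⟩ := hCA
        exact Or.inr ⟨a, hAt_C₁ haAt, hAtnE2 a haAt, ((inv.conf_iff e a).mp hconf').1⟩
    · rcases inv.del_mem e hec hc with hC | ⟨d, hdC, hdn, hconf⟩
      · exact Or.inl (hCstay e hC hc)
      · exact Or.inr ⟨d, hCstay d hdC hdn, fun hE => hdn (hE2car hE), hconf⟩
  · -- del_conf
    rw [residStep_carrier]
    intro x hxC₁ hxn y hyE hconf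
    by_cases hc : x ∈ R'.carrier
    · rcases hsplit x hc hxn with hAt | hCA
      · exact hCAnE2 y ⟨hE2car hyE, x, hAt,
          (inv.conf_iff y x).mpr ⟨h.conf_symm x y hconf, hE2car hyE, hc⟩⟩ hyE
      · exact hCA_not x hCA hxC₁
    · exact inv.del_conf x (hC₁C x hxC₁ hc) hc y (hE2car hyE) hconf
  · -- unrev
    rw [residStep_F, residStep_carrier]
    intro e heF hne
    by_cases hF' : e ∈ R'.F
    · by_cases hE : e ∈ R'.rsCar A
      · -- e removed from F by the step
        have hrm : e ∈ R'.rsXrc A ∪ R'.rsXprev A := by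
          by_contra hcon
          exact hne ⟨⟨hF', hE⟩, hcon⟩
        rcases hrm with ⟨-, a, haCA, hrc'⟩ | ⟨-, a, haAt, hp'⟩
        · obtain ⟨-, d, hdAt, hconfd⟩ := haCA
          exact Or.inr ⟨a, d, ((inv.rc_iff a e).mp hrc').1, hAt_C₁ hdAt,
            hAtnE2 d hdAt, ((inv.conf_iff a d).mp hconfd).1⟩
        · exact Or.inl ⟨a, hAt_C₁ haAt, hAtnE2 a haAt, ((inv.prev_iff a e).mp hp').1⟩
      · -- e itself deleted
        rcases hsplit e (inv.F_sub hF').2 hE with hAt | hCA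
        · rcases hAt with hAb | ⟨-, x, hx, hlt'⟩
          · exact absurd hF' hAb.2
          · have hlt := ((inv.lt_iff e x).mp hlt').1
            have hprev : R.prev x e := (hcr e x hlt).2 heF
            have hxAt : x ∈ R'.Atd A := Set.mem_union_left _ hx
            exact Or.inl ⟨x, hAt_C₁ hxAt, hAtnE2 x hxAt, hprev⟩
        · obtain ⟨-, a, haAt, hconf'⟩ := hCA
          exact Or.inr ⟨e, a, h.rc_refl e heF, hAt_C₁ haAt, hAtnE2 a haAt,
            ((inv.conf_iff e a).mp hconf').1⟩
    · rcases inv.unrev e heF hF' with ⟨a, haC, han, hp⟩ | ⟨a, d, hrc, hdC, hdn, hconf⟩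
      · exact Or.inl ⟨a, hCstay a haC han, fun hE => han (hE2car hE), hp⟩
      · exact Or.inr ⟨a, d, hrc, hCstay d hdC hdn, fun hE => hdn (hE2car hE), hconf⟩
  · -- rc_mem
    rw [residStep_F, residStep_carrier]
    intro e heF2 a han hrc
    by_cases hc : a ∈ R'.carrier
    · rcases hsplit a hc han with hAt | hCA
      · exact hAt_C₁ hAt
      · refine absurd (Set.mem_union_left _ ?_) heF2.2
        exact ⟨hF2F heF2, a, hCA, (inv.rc_iff a e).mpr ⟨hrc, hc, hF2F heF2⟩⟩
    · exact hCstay a (inv.rc_mem e (hF2F heF2) a hc hrc) hc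
  · -- prev_not_mem
    rw [residStep_F, residStep_carrier]
    intro e heF2 a han hp haC₁
    by_cases hc : a ∈ R'.carrier
    · rcases hsplit a hc han with hAt | hCA
      · refine absurd (Set.mem_union_right _ ?_) heF2.2
        exact ⟨hF2F heF2, a, hAt, (inv.prev_iff a e).mpr ⟨hp, hc, hF2F heF2⟩⟩
      · exact hCA_not a hCA haC₁
    · exact inv.prev_notMem e (hF2F heF2) a hc hp (hC₁C a haC₁ hc)

end RPESData

namespace RPESData

variable {E : Type} {L : Type} {R : RPESData E L}

lemma stepLabel_congr {R' : RPESData E L} (hlab : R'.label = R.label) (A B : Set E) :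
    R'.stepLabel A B = R.stepLabel A B := by
  funext a
  simp only [stepLabel, hlab]

lemma isTraceFrom_append (A B : Set E) :
    ∀ (t : List (Set E × Set E)) (C C' : Set E), R.IsTraceFrom C t C' →
      R.Enabled C' A B → R.IsTraceFrom C (t ++ [(A, B)]) ((C' \ B) ∪ A)
  | [], C, C', ht, hen => by
    subst ht
    exact ⟨hen, rfl⟩
  | p :: t, C, C', ht, hen => by
    exact ⟨ht.1, isTraceFrom_append A B t _ C' ht.2 hen⟩

lemma resid_cons (p : Set E × Set E) (t : List (Set E × Set E)) :
    R.resid (p :: t) = (R.residStep p.1 p.2).resid t := rfl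

lemma resid_append (t : List (Set E × Set E)) (A B : Set E) :
    R.resid (t ++ [(A, B)]) = (R.resid t).residStep A B := by
  simp only [resid, List.foldl_append, List.foldl_cons, List.foldl_nil]

lemma reachConf_of_traceFrom :
    ∀ (t : List (Set E × Set E)) (C C' : Set E), R.ReachConf C →
      R.IsTraceFrom C t C' → R.ReachConf C'
  | [], C, C', hr, ht => ht ▸ hr
  | p :: t, C, C', hr, ht =>
    reachConf_of_traceFrom t _ C' (ReachConf.step C p.1 p.2 hr ht.1) ht.2

lemma inv_of_traceFrom (h : R.IsRPES) (hcr : R.CauseRespecting) :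
    ∀ (t : List (Set E × Set E)) (C C' : Set E) (R' : RPESData E L), Inv R C R' →
      R.IsTraceFrom C t C' → Inv R C' (R'.resid t)
  | [], C, C', R', hinv, ht => ht ▸ hinv
  | p :: t, C, C', R', hinv, ht => by
    rw [resid_cons]
    have hen : R.Enabled C p.1 p.2 := by
      have := ht.1
      exact this
    exact inv_of_traceFrom h hcr t _ C' _ (inv_step h hcr hinv hen) ht.2

end RPESData


/-- For a cause-respecting RPES `R`, the configuration transition
system `TC(R)` and the residual transition system `TE(R)` are bisimilar via
`Rl = {(last(t), R \ t) | t ∈ Traces(R)}`. -/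
theorem TC_TE_bisimilar {E L : Type} (R : RPESData E L) (h : R.IsRPES)
    (hcr : R.CauseRespecting) :
    IsBisimulation R.TC R.TE
      (fun C F => ∃ t, R.IsTraceTo t C ∧ F = R.resid t) := by
  refine ⟨⟨[], rfl, rfl⟩, ?_, ?_⟩
  · -- TC simulates into TE
    rintro C F ⟨t, ht, rfl⟩ M C₁ ⟨hreach, A, B, hen, hC₁, hM⟩
    have inv : R.Inv C (R.resid t) :=
      R.inv_of_traceFrom h hcr t R.C0 C R (RPESData.inv_init h) ht
    have hen' := RPESData.enabled_to h inv hen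
    refine ⟨(R.resid t).residStep A B, ⟨A, B, ?_, rfl, ?_⟩,
      t ++ [(A, B)], ?_, ?_⟩
    · rw [inv.C0_eq]; exact hen'
    · rw [hM, RPESData.stepLabel_congr inv.label_eq]
    · subst hC₁
      exact RPESData.isTraceFrom_append A B t R.C0 C ht hen
    · exact (RPESData.resid_append t A B).symm
  · -- TE simulates into TC
    rintro C F ⟨t, ht, rfl⟩ M F₁ ⟨A, B, hen', hF₁, hM⟩
    have inv : R.Inv C (R.resid t) :=
      R.inv_of_traceFrom h hcr t R.C0 C R (RPESData.inv_init h) ht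
    rw [inv.C0_eq] at hen'
    have hen := RPESData.enabled_from h hcr inv hen'
    refine ⟨(C \ B) ∪ A, ⟨?_, A, B, hen, rfl, ?_⟩, t ++ [(A, B)], ?_, ?_⟩
    · exact R.reachConf_of_traceFrom t R.C0 C RPESData.ReachConf.init ht
    · rw [hM, RPESData.stepLabel_congr inv.label_eq]
    · exact RPESData.isTraceFrom_append A B t R.C0 C ht hen
    · rw [hF₁, RPESData.resid_append t A B]
end
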